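/- Let X be a Banach space and 𝔄 a norm-closed subalgebra of L(X). Then the set of strictly cyclic vectors for 𝔄 is open in X. -/

import Mathlib

open Filter Finset Metric Function

theorem surj_of_approx {𝕜 E F : Type*} [RCLike 𝕜]
    [NormedAddCommGroup E] [NormedSpace 𝕜 E] [CompleteSpace E]
    [NormedAddCommGroup F] [NormedSpace 𝕜 F]
    (f : E →L[𝕜] F) {C r : ℝ} (hC : 0 ≤ C) (hr0 : 0 ≤ r) (hr : r < 1)
    (hyp : ∀ y : F, ∃ x, ‖x‖ ≤ C * ‖y‖ ∧ ‖y - f x‖ ≤ r * ‖y‖) :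
    Surjective f := by
  choose g hg using hyp
  set h : F → F := fun y => y - f (g y) with hh
  have hle : ∀ y, ‖h y‖ ≤ r * ‖y‖ := fun y => (hg y).2
  intro y
  have hnle : ∀ n : ℕ, ‖h^[n] y‖ ≤ r ^ n * ‖y‖ := by
    intro n
    induction n with
    | zero => simp
    | succ n IH =>
      rw [Function.iterate_succ']
      refine le_trans (hle _) ?_
      rw [pow_succ', mul_assoc]
      gcongr
  set u : ℕ → E := fun n => g (h^[n] y) with hu
  have ule : ∀ n, ‖u n‖ ≤ r ^ n * (C * ‖y‖) := fun n => by
    refine le_trans (hg _).1 ?_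
    calc C * ‖h^[n] y‖ ≤ C * (r ^ n * ‖y‖) := by gcongr; exact hnle n
      _ = r ^ n * (C * ‖y‖) := by ring
  have sNu : Summable fun n => ‖u n‖ := by
    refine .of_nonneg_of_le (fun n => norm_nonneg _) ule ?_
    exact Summable.mul_right _ (summable_geometric_of_lt_one hr0 hr)
  have su : Summable u := sNu.of_norm
  set x := tsum u with hx
  have fsumeq : ∀ n : ℕ, f (∑ i ∈ Finset.range n, u i) = y - h^[n] y := by
    intro n
    induction n with
    | zero => simp [f.map_zero]
    | succ n IH =>
      rw [sum_range_succ, f.map_add, IH, Function.iterate_succ_apply']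
      show y - h^[n] y + f (u n) = y - (h^[n] y - f (g (h^[n] y)))
      abel
  have key : Tendsto (fun n => ∑ i ∈ Finset.range n, u i) atTop (nhds x) :=
    su.hasSum.tendsto_sum_nat
  have L₁ : Tendsto (fun n => f (∑ i ∈ Finset.range n, u i)) atTop (nhds (f x)) :=
    (f.continuous.tendsto _).comp key
  simp only [fsumeq] at L₁
  have L₂ : Tendsto (fun n => y - h^[n] y) atTop (nhds (y - 0)) := by
    refine tendsto_const_nhds.sub ?_
    rw [tendsto_iff_norm_sub_tendsto_zero]
    simp only [sub_zero]
    refine squeeze_zero (fun _ => norm_nonneg _) hnle ?_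
    rw [← zero_mul ‖y‖]
    exact (tendsto_pow_atTop_nhds_zero_of_lt_one hr0 hr).mul tendsto_const_nhds
  have feq : f x = y - 0 := tendsto_nhds_unique L₁ L₂
  exact ⟨x, by rwa [sub_zero] at feq⟩

theorem stmt_2 {𝕜 X : Type*} [RCLike 𝕜]
    [NormedAddCommGroup X] [NormedSpace 𝕜 X] [CompleteSpace X]
    (𝔄 : NonUnitalSubalgebra 𝕜 (X →L[𝕜] X))
    (hclosed : IsClosed (𝔄 : Set (X →L[𝕜] X))) :
    IsOpen {x : X | ∀ y : X, ∃ A ∈ 𝔄, A x = y} := by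
  haveI : CompleteSpace ↥𝔄 := hclosed.completeSpace_coe
  letI : NormedSpace 𝕜 ↥𝔄 := { norm_smul_le := fun c a => norm_smul_le c (a : X →L[𝕜] X) }
  set ev : X → (↥𝔄 →L[𝕜] X) := fun x =>
    (ContinuousLinearMap.apply 𝕜 X x).comp (NonUnitalSubalgebra.toSubmodule 𝔄).subtypeL with hev
  have hev_apply : ∀ (x : X) (A : ↥𝔄), ev x A = (A : X →L[𝕜] X) x := fun x A => rfl
  rw [Metric.isOpen_iff]
  intro x₀ hx₀
  have hsurj : Surjective (ev x₀) := by
    intro y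
    obtain ⟨A, hA, hAx⟩ := hx₀ y
    exact ⟨⟨A, hA⟩, hAx⟩
  obtain ⟨C, hC, hpre⟩ := ContinuousLinearMap.exists_preimage_norm_le (𝕜 := 𝕜) (𝕜' := 𝕜) (σ := RingHom.id 𝕜) (E := ↥𝔄) (F := X) (ev x₀) hsurj
  refine ⟨1 / (2 * C), by positivity, fun x hx => ?_⟩
  have hsurj' : Surjective (ev x) := by
    refine surj_of_approx (𝕜 := 𝕜) (E := ↥𝔄) (F := X) (ev x) hC.le (by norm_num : (0:ℝ) ≤ 1/2) (by norm_num) fun y => ?_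
    obtain ⟨B, hBy, hBn⟩ := hpre y
    refine ⟨B, hBn, ?_⟩
    have h1 : y - ev x B = (B : X →L[𝕜] X) (x₀ - x) := by
      rw [← hBy, hev_apply, hev_apply, map_sub]
    rw [h1]
    calc ‖(B : X →L[𝕜] X) (x₀ - x)‖ ≤ ‖(B : X →L[𝕜] X)‖ * ‖x₀ - x‖ :=
          (B : X →L[𝕜] X).le_opNorm _
      _ ≤ (C * ‖y‖) * (1 / (2 * C)) := by
          refine mul_le_mul hBn ?_ (norm_nonneg _) (by positivity)
          rw [← dist_eq_norm, dist_comm]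
          exact hx.le
      _ = 1 / 2 * ‖y‖ := by field_simp
  intro y
  obtain ⟨A, hA⟩ := hsurj' y
  exact ⟨A, A.2, hA⟩
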